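/- arXiv:2301.09981 — 4 statements merged into one kernel-verified Lean document; each statement's English description precedes it below -/
import Mathlib

section
/- Lemma (error recursion under compression and censoring). In CC-DQM with a deterministic δ-contractive compressor, 0 ≤ δ < 1, the stacked error e_k = y_k − x_k satisfies, for every k ≥ 0, ‖e_{k+1}‖² ≤ √δ ‖e_k‖² + (δ/(1−√δ)) ‖x_{k+1} − x_k‖² + n μ_{k+1}². -/
open scoped RealInnerProductSpace BigOperators

noncomputable section

/-- Blockwise action of a matrix `A` on stacked vectors in `(ℝ^d)^n ≅ ℝ^{nd}`
(i.e. the action of `A ⊗ I_d`). -/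
def blockMul {m n d : ℕ} (A : Matrix (Fin m) (Fin n) ℝ)
    (z : Fin n → EuclideanSpace ℝ (Fin d)) : Fin m → EuclideanSpace ℝ (Fin d) :=
  fun i => ∑ j, A i j • z j

/-- `t` is an eigenvalue of the real matrix `A`. -/
def IsEigenvalue {n : ℕ} (A : Matrix (Fin n) (Fin n) ℝ) (t : ℝ) : Prop :=
  ∃ z : Fin n → ℝ, z ≠ 0 ∧ A.mulVec z = t • z

/-- The signed Laplacian `L = D - W` of a graph. -/
def signedLap {n : ℕ} (G : SimpleGraph (Fin n)) [DecidableRel G.Adj] :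
    Matrix (Fin n) (Fin n) ℝ :=
  Matrix.diagonal (fun i => (G.degree i : ℝ)) - G.adjMatrix ℝ

/-- The unsigned Laplacian `L_s = D + W` of a graph. -/
def unsignedLap {n : ℕ} (G : SimpleGraph (Fin n)) [DecidableRel G.Adj] :
    Matrix (Fin n) (Fin n) ℝ :=
  Matrix.diagonal (fun i => (G.degree i : ℝ)) + G.adjMatrix ℝ

/-- The CC-DQM iteration: initializations `y₀ = 0`, `φ₀ = 0`, the primal update
`x_{i,k+1} = x_{i,k} - (2 c dᵢ I + ∇²fᵢ(y_{i,k}))⁻¹ (∇fᵢ(x_{i,k}) + c Σ_{j ∈ Nᵢ} (y_{i,k} - y_{j,k}) + φ_{i,k})`,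
the censored/compressed state update for `y`, and the dual update for `φ`. -/
def IsCCDQM {n d : ℕ} (G : SimpleGraph (Fin n)) [DecidableRel G.Adj]
    (f : Fin n → EuclideanSpace ℝ (Fin d) → ℝ) (c : ℝ) (μ : ℕ → ℝ)
    (C : EuclideanSpace ℝ (Fin d) → EuclideanSpace ℝ (Fin d))
    (x y φ : ℕ → Fin n → EuclideanSpace ℝ (Fin d)) : Prop :=
  (∀ i, y 0 i = 0) ∧ (∀ i, φ 0 i = 0) ∧
  (∀ k i, x (k+1) i = x k i -
      Ring.inverse ((2 * c * (G.degree i : ℝ)) •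
            (1 : EuclideanSpace ℝ (Fin d) →L[ℝ] EuclideanSpace ℝ (Fin d))
          + fderiv ℝ (gradient (f i)) (y k i))
        (gradient (f i) (x k i)
          + c • ∑ j ∈ G.neighborFinset i, (y k i - y k j) + φ k i)) ∧
  (∀ k i, y (k+1) i =
      if μ (k+1) ≤ ‖x (k+1) i - y k i‖ then y k i + C (x (k+1) i - y k i) else y k i) ∧
  (∀ k i, φ (k+1) i = φ k i + c • ∑ j ∈ G.neighborFinset i, (y (k+1) i - y (k+1) j))

/-- **Lemma 1** (error recursion under compression and censoring). In CC-DQM with a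
deterministic `δ`-contractive compressor, the stacked error `e_k = y_k - x_k` satisfies
`‖e_{k+1}‖² ≤ √δ ‖e_k‖² + (δ/(1-√δ)) ‖x_{k+1} - x_k‖² + n μ_{k+1}²`. -/
theorem ccdqm_error_recursion
    {n d : ℕ} (G : SimpleGraph (Fin n)) [DecidableRel G.Adj] (hconn : G.Connected)
    (f : Fin n → EuclideanSpace ℝ (Fin d) → ℝ)
    (hf : ∀ i, ContDiff ℝ 2 (f i))
    (c δ : ℝ) (hc : 0 < c) (hδ0 : 0 ≤ δ) (hδ1 : δ < 1)
    (C : EuclideanSpace ℝ (Fin d) → EuclideanSpace ℝ (Fin d))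
    (hC : ∀ z, ‖C z - z‖ ^ 2 ≤ δ * ‖z‖ ^ 2)
    (μ : ℕ → ℝ) (hμ : ∀ k, 0 ≤ μ k)
    (x y φ : ℕ → Fin n → EuclideanSpace ℝ (Fin d))
    (halg : IsCCDQM G f c μ C x y φ) :
    ∀ k : ℕ,
      (∑ i, ‖y (k+1) i - x (k+1) i‖ ^ 2) ≤
        Real.sqrt δ * (∑ i, ‖y k i - x k i‖ ^ 2)
          + δ / (1 - Real.sqrt δ) * (∑ i, ‖x (k+1) i - x k i‖ ^ 2)
          + n * μ (k+1) ^ 2 := by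

  obtain ⟨hy0, hφ0, hx, hy, hφ⟩ := halg
  intro k
  set s := Real.sqrt δ with hs
  have hs0 : 0 ≤ s := Real.sqrt_nonneg δ
  have hsq : s ^ 2 = δ := Real.sq_sqrt hδ0
  have hs1 : s < 1 := by nlinarith
  have h1s : 0 < 1 - s := by linarith
  have hcoef : 0 ≤ δ / (1 - s) := div_nonneg hδ0 h1s.le
  have key : ∀ i : Fin n, ‖y (k+1) i - x (k+1) i‖ ^ 2 ≤
      s * ‖y k i - x k i‖ ^ 2 + δ / (1 - s) * ‖x (k+1) i - x k i‖ ^ 2 + μ (k+1) ^ 2 := by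
    intro i
    set p := ‖y k i - x k i‖ with hp'
    set q := ‖x (k+1) i - x k i‖ with hq'
    have hp : 0 ≤ p := norm_nonneg _
    have hq : 0 ≤ q := norm_nonneg _
    have hz : ‖x (k+1) i - y k i‖ ≤ p + q := by
      have he : x (k+1) i - y k i = (x (k+1) i - x k i) - (y k i - x k i) := by abel
      rw [he]
      calc ‖(x (k+1) i - x k i) - (y k i - x k i)‖ ≤ q + p := norm_sub_le _ _
        _ = p + q := by ring
    rw [hy k i]
    by_cases hcond : μ (k+1) ≤ ‖x (k+1) i - y k i‖
    · rw [if_pos hcond]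
      have h1 : y k i + C (x (k+1) i - y k i) - x (k+1) i
          = C (x (k+1) i - y k i) - (x (k+1) i - y k i) := by abel
      rw [h1]
      have h2 := hC (x (k+1) i - y k i)
      have h3 : δ * ‖x (k+1) i - y k i‖ ^ 2 ≤ δ * (p + q) ^ 2 :=
        mul_le_mul_of_nonneg_left (pow_le_pow_left₀ (norm_nonneg _) hz 2) hδ0
      have hkey2 : (1 - s) * (δ * (p + q) ^ 2) ≤ (1 - s) * (s * p ^ 2) + δ * q ^ 2 := by
        rw [← hsq]
        nlinarith [mul_nonneg hs0 (sq_nonneg ((1 - s) * p - s * q))]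
      have e1 : s * p ^ 2 + δ / (1 - s) * q ^ 2 - δ * (p + q) ^ 2
          = ((1 - s) * (s * p ^ 2) + δ * q ^ 2 - (1 - s) * (δ * (p + q) ^ 2)) / (1 - s) := by
        field_simp
      have h6 : 0 ≤ s * p ^ 2 + δ / (1 - s) * q ^ 2 - δ * (p + q) ^ 2 := by
        rw [e1]
        exact div_nonneg (by linarith) h1s.le
      have hμ2 : 0 ≤ μ (k+1) ^ 2 := sq_nonneg _
      linarith
    · rw [if_neg hcond]
      have hlt : ‖x (k+1) i - y k i‖ < μ (k+1) := lt_of_not_ge hcond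
      have hn : ‖y k i - x (k+1) i‖ = ‖x (k+1) i - y k i‖ := norm_sub_rev _ _
      have hsq2 : ‖y k i - x (k+1) i‖ ^ 2 ≤ μ (k+1) ^ 2 := by
        rw [hn]
        exact pow_le_pow_left₀ (norm_nonneg _) hlt.le 2
      have t1 : 0 ≤ s * p ^ 2 := mul_nonneg hs0 (sq_nonneg p)
      have t2 : 0 ≤ δ / (1 - s) * q ^ 2 := mul_nonneg hcoef (sq_nonneg q)
      linarith
  calc (∑ i, ‖y (k+1) i - x (k+1) i‖ ^ 2)
      ≤ ∑ i, (s * ‖y k i - x k i‖ ^ 2 + δ / (1 - s) * ‖x (k+1) i - x k i‖ ^ 2 + μ (k+1) ^ 2) :=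
        Finset.sum_le_sum (fun i _ => key i)
    _ = s * (∑ i, ‖y k i - x k i‖ ^ 2)
          + δ / (1 - s) * (∑ i, ‖x (k+1) i - x k i‖ ^ 2) + n * μ (k+1) ^ 2 := by
        simp [Finset.sum_add_distrib, ← Finset.mul_sum, Finset.card_univ]
end
end

section
/- Dual residual bound. Let c > 0, γ = 2ℓ > 0, and suppose vectors g, Δ, e, e', w and matrices L, L_s, M (all acting blockwise on ℝ^{nd}) satisfy the identity g + c L_s Δx + Δ = c L (e' − e) − 2 c Mᵀ w, where: ‖g‖ ≤ ℓ‖x_+ − x*‖ (g is a difference of gradients of an ℓ-smooth function at x_+ and x*), ‖Δ‖ ≤ γ‖Δx‖ with Δx = x_+ − x_−, ‖L_s z‖ ≤ λ̂ₙ‖z‖ and ‖L z‖ ≤ λₙ‖z‖ for all z, MᵀM = 2L, λ₂ > 0 is the smallest positive eigenvalue of L, and w lies in the range of M (blockwise). Then ‖w‖² ≤ ((c² λ̂ₙ² + γ²)/(c² λ₂)) ‖Δx‖² + (λₙ²/(2 λ₂)) (‖e‖² + ‖e'‖²) + (ℓ²/(2 c² λ₂)) ‖x_+ − x*‖². -/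
open scoped BigOperators
open Matrix

noncomputable section

/-- The Euclidean norm of a stacked vector. -/
def stackNorm {n d : ℕ} (z : Fin n → EuclideanSpace ℝ (Fin d)) : ℝ :=
  Real.sqrt (∑ i, ‖z i‖ ^ 2)

/-! ### Auxiliary lemmas -/

lemma stackNorm_eq {n d : ℕ} (z : Fin n → EuclideanSpace ℝ (Fin d)) :
    stackNorm z = ‖(WithLp.equiv 2 (∀ _ : Fin n, EuclideanSpace ℝ (Fin d))).symm z‖ := by
  rw [stackNorm, PiLp.norm_eq_of_L2]
  rfl

lemma stackNorm_nonneg {n d : ℕ} (z : Fin n → EuclideanSpace ℝ (Fin d)) :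
    0 ≤ stackNorm z := Real.sqrt_nonneg _

lemma stackNorm_sq {n d : ℕ} (z : Fin n → EuclideanSpace ℝ (Fin d)) :
    stackNorm z ^ 2 = ∑ i, ‖z i‖ ^ 2 :=
  Real.sq_sqrt (Finset.sum_nonneg fun _ _ => sq_nonneg _)

lemma stackNorm_sub_le {n d : ℕ} (x y : Fin n → EuclideanSpace ℝ (Fin d)) :
    stackNorm (fun i => x i - y i) ≤ stackNorm x + stackNorm y := by
  rw [stackNorm_eq, stackNorm_eq, stackNorm_eq]
  exact norm_sub_le _ _

lemma stackNorm_smul {n d : ℕ} (r : ℝ) (z : Fin n → EuclideanSpace ℝ (Fin d)) :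
    stackNorm (fun i => r • z i) = |r| * stackNorm z := by
  rw [stackNorm_eq, stackNorm_eq]
  rw [show ((WithLp.equiv 2 (∀ _ : Fin n, EuclideanSpace ℝ (Fin d))).symm (fun i => r • z i))
      = r • ((WithLp.equiv 2 (∀ _ : Fin n, EuclideanSpace ℝ (Fin d))).symm z) from rfl]
  rw [norm_smul, Real.norm_eq_abs]

lemma blockMul_apply {a b d : ℕ} (A : Matrix (Fin a) (Fin b) ℝ)
    (v : Fin b → EuclideanSpace ℝ (Fin d)) (i : Fin a) (k : Fin d) :
    blockMul A v i k = A.mulVec (fun j => v j k) i := by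
  simp only [blockMul, Matrix.mulVec, dotProduct]
  rw [WithLp.ofLp_sum, Finset.sum_apply]
  exact Finset.sum_congr rfl fun j _ => rfl

lemma normsq {d : ℕ} (x : EuclideanSpace ℝ (Fin d)) : ‖x‖ ^ 2 = ∑ k, x k ^ 2 := by
  rw [PiLp.norm_sq_eq_of_L2]
  simp [sq_abs]

/-- Spectral gap for a real PSD matrix: `λ₂ ⟨u, Lu⟩ ≤ ‖Lu‖²`. -/
lemma specA {n : ℕ} (L : Matrix (Fin n) (Fin n) ℝ) (hL : L.PosSemidef) (lam2 : ℝ)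
    (h2 : ∀ t, IsEigenvalue L t → 0 < t → lam2 ≤ t)
    (u : Fin n → ℝ) :
    lam2 * (u ⬝ᵥ L.mulVec u) ≤ ∑ k, (L.mulVec u k) ^ 2 := by
  classical
  set b := hL.1.eigenvectorBasis with hb
  set μ := hL.1.eigenvalues with hμ
  set u' : EuclideanSpace ℝ (Fin n) := WithLp.toLp 2 u with hu'
  set cc : Fin n → ℝ := fun i => b.repr u' i with hcc
  have hrepr : ∑ i, cc i • (b i : EuclideanSpace ℝ (Fin n)) = u' := b.sum_repr u'
  have hufun : ∀ k, u k = ∑ i, cc i * b i k := by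
    intro k
    have h1 : u' k = (∑ i, cc i • (b i : EuclideanSpace ℝ (Fin n))) k := by rw [hrepr]
    rw [WithLp.ofLp_sum, Finset.sum_apply] at h1
    simpa [PiLp.smul_apply] using h1
  have horth : ∀ i j, ∑ k, b i k * b j k = if i = j then (1:ℝ) else 0 := by
    intro i j
    have h := (orthonormal_iff_ite.mp b.orthonormal) i j
    simpa [PiLp.inner_apply, RCLike.inner_apply, conj_trivial, mul_comm] using h
  have hLb : ∀ i k, ∑ j, L k j * b i j = μ i * b i k := by
    intro i k
    have := congrFun (hL.1.mulVec_eigenvectorBasis i) k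
    simpa [Matrix.mulVec, dotProduct] using this
  have hLu : ∀ k, L.mulVec u k = ∑ i, (cc i * μ i) * b i k := by
    intro k
    simp only [Matrix.mulVec, dotProduct]
    calc ∑ j, L k j * u j = ∑ j, ∑ i, cc i * (L k j * b i j) := by
          refine Finset.sum_congr rfl fun j _ => ?_
          rw [hufun j, Finset.mul_sum]
          exact Finset.sum_congr rfl fun i _ => by ring
      _ = ∑ i, cc i * ∑ j, L k j * b i j := by
          rw [Finset.sum_comm]
          exact Finset.sum_congr rfl fun i _ => by rw [Finset.mul_sum]
      _ = ∑ i, (cc i * μ i) * b i k := by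
          refine Finset.sum_congr rfl fun i _ => ?_
          rw [hLb i k]; ring
  have key : ∀ a f : Fin n → ℝ,
      ∑ k, (∑ i, a i * b i k) * (∑ j, f j * b j k) = ∑ i, a i * f i := by
    intro a f
    have h1 : ∀ k, (∑ i, a i * b i k) * (∑ j, f j * b j k)
        = ∑ i, ∑ j, a i * f j * (b i k * b j k) := by
      intro k
      rw [Finset.sum_mul_sum]
      exact Finset.sum_congr rfl fun i _ => Finset.sum_congr rfl fun j _ => by ring
    simp_rw [h1]
    rw [Finset.sum_comm]
    refine Finset.sum_congr rfl fun i _ => ?_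
    rw [Finset.sum_comm]
    have h2 : ∀ j, ∑ k, a i * f j * (b i k * b j k)
        = a i * f j * (if i = j then 1 else 0) := by
      intro j; rw [← Finset.mul_sum, horth]
    simp_rw [h2]
    simp [mul_ite, Finset.sum_ite_eq]
  have hq1 : u ⬝ᵥ L.mulVec u = ∑ i, cc i * (cc i * μ i) := by
    have h3 : ∀ k, u k * L.mulVec u k
        = (∑ i, cc i * b i k) * (∑ j, (cc j * μ j) * b j k) := by
      intro k; rw [hufun k, hLu k]
    simp only [dotProduct]
    rw [Finset.sum_congr rfl fun k _ => h3 k, key]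
  have hq2 : ∑ k, (L.mulVec u k) ^ 2 = ∑ i, (cc i * μ i) * (cc i * μ i) := by
    have h3 : ∀ k, (L.mulVec u k) ^ 2
        = (∑ i, (cc i * μ i) * b i k) * (∑ j, (cc j * μ j) * b j k) := by
      intro k; rw [hLu k]; ring
    rw [Finset.sum_congr rfl fun k _ => h3 k, key]
  rw [hq1, hq2, Finset.mul_sum]
  refine Finset.sum_le_sum fun i _ => ?_
  have hnn : 0 ≤ μ i := hL.eigenvalues_nonneg i
  rcases eq_or_lt_of_le hnn with h0 | hpos
  · rw [← h0]; ring_nf; exact le_refl 0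
  · have hev : IsEigenvalue L (μ i) := by
      refine ⟨fun k => b i k, ?_, ?_⟩
      · intro hz
        have : (b i : EuclideanSpace ℝ (Fin n)) = 0 := by
          ext k; exact congrFun hz k
        exact b.orthonormal.ne_zero i this
      · funext k
        simpa [Matrix.mulVec, dotProduct] using hLb i k
    have hle := h2 (μ i) hev hpos
    nlinarith [sq_nonneg (cc i), hpos, hle]

/-- Blockwise spectral gap: for `w = M z`, `2λ₂ ‖w‖² ≤ ‖Mᵀ w‖²`. -/
lemma specB {n m d : ℕ} (L : Matrix (Fin n) (Fin n) ℝ) (M : Matrix (Fin m) (Fin n) ℝ)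
    (hL : L.PosSemidef) (hM : Mᵀ * M = (2 : ℝ) • L) (lam2 : ℝ)
    (h2 : ∀ t, IsEigenvalue L t → 0 < t → lam2 ≤ t)
    (z : Fin n → EuclideanSpace ℝ (Fin d)) :
    2 * lam2 * ∑ i, ‖blockMul M z i‖ ^ 2
      ≤ ∑ j, ‖blockMul Mᵀ (blockMul M z) j‖ ^ 2 := by
  classical
  have hL2 : ∑ i, ‖blockMul M z i‖ ^ 2
      = ∑ k, ∑ i, (M.mulVec (fun j => z j k) i) ^ 2 := by
    rw [Finset.sum_comm]
    refine Finset.sum_congr rfl fun i _ => ?_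
    rw [normsq]
    exact Finset.sum_congr rfl fun k _ => by rw [blockMul_apply]
  have hR2 : ∑ j, ‖blockMul Mᵀ (blockMul M z) j‖ ^ 2
      = ∑ k, ∑ j, (Mᵀ.mulVec (fun i => blockMul M z i k) j) ^ 2 := by
    rw [Finset.sum_comm]
    refine Finset.sum_congr rfl fun j _ => ?_
    rw [normsq]
    exact Finset.sum_congr rfl fun k _ => by rw [blockMul_apply]
  rw [hL2, hR2, Finset.mul_sum]
  refine Finset.sum_le_sum fun k _ => ?_
  set u : Fin n → ℝ := fun j => z j k with hu
  have hw : (fun i => blockMul M z i k) = M.mulVec u := by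
    funext i; rw [blockMul_apply]
  rw [hw]
  have hMt : Mᵀ.mulVec (M.mulVec u) = fun j => 2 * L.mulVec u j := by
    rw [Matrix.mulVec_mulVec, hM]
    funext j
    simp [Matrix.smul_mulVec]
  have hdot : ∑ i, (M.mulVec u i) ^ 2 = 2 * (u ⬝ᵥ L.mulVec u) := by
    have h1 : ∑ i, (M.mulVec u i) ^ 2 = (M.mulVec u) ⬝ᵥ (M.mulVec u) := by
      simp [dotProduct, sq]
    rw [h1, Matrix.dotProduct_mulVec, ← Matrix.mulVec_transpose,
      Matrix.mulVec_mulVec, hM, Matrix.smul_mulVec]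
    simp [smul_dotProduct, dotProduct_comm]
  rw [hdot, hMt]
  have hA := specA L hL lam2 h2 u
  calc 2 * lam2 * (2 * (u ⬝ᵥ L.mulVec u)) = 4 * (lam2 * (u ⬝ᵥ L.mulVec u)) := by ring
    _ ≤ 4 * ∑ j, (L.mulVec u j) ^ 2 := by linarith
    _ = ∑ j, (2 * L.mulVec u j) ^ 2 := by
        rw [Finset.mul_sum]; exact Finset.sum_congr rfl fun j _ => by ring


/-- Scalar arithmetic step, isolated so that `linarith` works over small atoms. -/
lemma scalar_step (c ℓ γ lam2 lamn' lhn' A B D X N S : ℝ)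
    (hc : 0 < c) (hl2pos : 0 < lam2)
    (hN0 : 0 ≤ N) (hS0 : 0 ≤ S)
    (h1 : 2 * c * N ≤ c * (lamn' * (B + A)) + ℓ * X + c * (lhn' * D) + γ * D)
    (h2 : 2 * lam2 * S ≤ N ^ 2) :
    S ≤ (c ^ 2 * lhn' ^ 2 + γ ^ 2) / (c ^ 2 * lam2) * D ^ 2
      + lamn' ^ 2 / (2 * lam2) * (A ^ 2 + B ^ 2)
      + ℓ ^ 2 / (2 * c ^ 2 * lam2) * X ^ 2 := by
  have hbase0 : 0 ≤ 2 * c * N := mul_nonneg (by linarith) hN0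
  have hsq : (2 * c * N) ^ 2
      ≤ (c * (lamn' * (B + A)) + ℓ * X + c * (lhn' * D) + γ * D) ^ 2 :=
    pow_le_pow_left₀ hbase0 h1 2
  set a := c * lamn' * A with ha
  set b := c * lamn' * B with hbb
  set x := ℓ * X with hx
  set p := c * lhn' * D with hp
  set q := γ * D with hq
  have heq : c * (lamn' * (B + A)) + ℓ * X + c * (lhn' * D) + γ * D
      = a + b + x + p + q := by rw [ha, hbb, hx, hp, hq]; ring
  have hiden : 4 * a ^ 2 + 4 * b ^ 2 + 4 * x ^ 2 + 8 * p ^ 2 + 8 * q ^ 2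
      - (a + b + x + p + q) ^ 2
      = (a - b) ^ 2 + (a - x) ^ 2 + (b - x) ^ 2
        + ((a - 2*p) ^ 2 + (a - 2*q) ^ 2 + (b - 2*p) ^ 2 + (b - 2*q) ^ 2
          + (x - 2*p) ^ 2 + (x - 2*q) ^ 2) / 2 + (p - q) ^ 2 := by ring
  have hcs : (a + b + x + p + q) ^ 2
      ≤ 4 * a ^ 2 + 4 * b ^ 2 + 4 * x ^ 2 + 8 * p ^ 2 + 8 * q ^ 2 := by
    linarith [sq_nonneg (a - b), sq_nonneg (a - x), sq_nonneg (b - x),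
      sq_nonneg (a - 2*p), sq_nonneg (a - 2*q), sq_nonneg (b - 2*p), sq_nonneg (b - 2*q),
      sq_nonneg (x - 2*p), sq_nonneg (x - 2*q), sq_nonneg (p - q)]
  have hmain : 8 * c ^ 2 * lam2 * S
      ≤ 8 * (c ^ 2 * lhn' ^ 2 + γ ^ 2) * D ^ 2
        + 4 * c ^ 2 * lamn' ^ 2 * (A ^ 2 + B ^ 2) + 4 * ℓ ^ 2 * X ^ 2 := by
    have k1 : 8 * c ^ 2 * lam2 * S = 4 * c ^ 2 * (2 * lam2 * S) := by ring
    have k2 : 4 * c ^ 2 * (2 * lam2 * S) ≤ 4 * c ^ 2 * N ^ 2 :=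
      mul_le_mul_of_nonneg_left h2 (by positivity)
    have k3 : 4 * c ^ 2 * N ^ 2 = (2 * c * N) ^ 2 := by ring
    have k4 : 4 * a ^ 2 + 4 * b ^ 2 + 4 * x ^ 2 + 8 * p ^ 2 + 8 * q ^ 2
        = 8 * (c ^ 2 * lhn' ^ 2 + γ ^ 2) * D ^ 2
          + 4 * c ^ 2 * lamn' ^ 2 * (A ^ 2 + B ^ 2) + 4 * ℓ ^ 2 * X ^ 2 := by
      rw [ha, hbb, hx, hp, hq]; ring
    rw [heq] at hsq
    linarith
  have hpos : (0:ℝ) < 8 * c ^ 2 * lam2 :=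
    mul_pos (mul_pos (by norm_num) (pow_pos hc 2)) hl2pos
  have hc2 : (c : ℝ) ^ 2 ≠ 0 := ne_of_gt (pow_pos hc 2)
  have hl2ne : lam2 ≠ 0 := ne_of_gt hl2pos
  have hRHSeq : (c ^ 2 * lhn' ^ 2 + γ ^ 2) / (c ^ 2 * lam2) * D ^ 2
      + lamn' ^ 2 / (2 * lam2) * (A ^ 2 + B ^ 2)
      + ℓ ^ 2 / (2 * c ^ 2 * lam2) * X ^ 2
      = (8 * (c ^ 2 * lhn' ^ 2 + γ ^ 2) * D ^ 2
        + 4 * c ^ 2 * lamn' ^ 2 * (A ^ 2 + B ^ 2) + 4 * ℓ ^ 2 * X ^ 2)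
        / (8 * c ^ 2 * lam2) := by
    field_simp
    ring
  rw [hRHSeq, le_div_iff₀ hpos]
  calc S * (8 * c ^ 2 * lam2) = 8 * c ^ 2 * lam2 * S := by ring
    _ ≤ _ := hmain

set_option maxHeartbeats 1000000 in
/-- **Dual residual bound.** From the identity
`g + c L_s Δx + Δ = c L (e' - e) - 2 c Mᵀ w` together with the stated norm bounds,
`MᵀM = 2L` and `w` in the blockwise range of `M`, one obtains
`‖w‖² ≤ ((c² λ̂ₙ² + γ²)/(c² λ₂)) ‖Δx‖² + (λₙ²/(2λ₂)) (‖e‖² + ‖e'‖²) + (ℓ²/(2c²λ₂)) ‖x₊ - x*‖²`. -/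
theorem dual_residual_bound
    {n m d : ℕ}
    (L Ls : Matrix (Fin n) (Fin n) ℝ) (M : Matrix (Fin m) (Fin n) ℝ)
    (hL : L.PosSemidef) (hLs : Ls.IsHermitian)
    (hM : Mᵀ * M = (2 : ℝ) • L)
    (c ℓ γ lam2 lamn lhn : ℝ)
    (hc : 0 < c) (hℓ : 0 < ℓ) (hγ : γ = 2 * ℓ)
    (hlam2 : IsEigenvalue L lam2 ∧ 0 < lam2 ∧
      ∀ t, IsEigenvalue L t → 0 < t → lam2 ≤ t)
    (hlamn : ∀ z : Fin n → EuclideanSpace ℝ (Fin d),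
      stackNorm (blockMul L z) ≤ lamn * stackNorm z)
    (hlhn : ∀ z : Fin n → EuclideanSpace ℝ (Fin d),
      stackNorm (blockMul Ls z) ≤ lhn * stackNorm z)
    (g Δ e e' xp xm xstar : Fin n → EuclideanSpace ℝ (Fin d))
    (w : Fin m → EuclideanSpace ℝ (Fin d))
    (hg : stackNorm g ≤ ℓ * stackNorm (fun i => xp i - xstar i))
    (hΔ : stackNorm Δ ≤ γ * stackNorm (fun i => xp i - xm i))
    (hw : ∃ z : Fin n → EuclideanSpace ℝ (Fin d), w = blockMul M z)
    (hid : ∀ i, g i + c • blockMul Ls (fun j => xp j - xm j) i + Δ i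
      = c • blockMul L (fun j => e' j - e j) i - (2 * c) • blockMul Mᵀ w i) :
    (∑ j, ‖w j‖ ^ 2) ≤
      (c ^ 2 * lhn ^ 2 + γ ^ 2) / (c ^ 2 * lam2) * ∑ i, ‖xp i - xm i‖ ^ 2
      + lamn ^ 2 / (2 * lam2) * ((∑ i, ‖e i‖ ^ 2) + ∑ i, ‖e' i‖ ^ 2)
      + ℓ ^ 2 / (2 * c ^ 2 * lam2) * ∑ i, ‖xp i - xstar i‖ ^ 2 := by
  classical
  obtain ⟨hl2ev, hl2pos, hl2min⟩ := hlam2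
  obtain ⟨z, hz⟩ := hw
  set Δx : Fin n → EuclideanSpace ℝ (Fin d) := fun j => xp j - xm j with hΔx
  set ed : Fin n → EuclideanSpace ℝ (Fin d) := fun j => e' j - e j with hed
  set Xv : Fin n → EuclideanSpace ℝ (Fin d) := fun i => xp i - xstar i with hXv
  set V : Fin n → EuclideanSpace ℝ (Fin d) := blockMul Mᵀ w with hV
  -- abbreviations for norms
  set A : ℝ := stackNorm e with hA
  set B : ℝ := stackNorm e' with hB
  set D : ℝ := stackNorm Δx with hD
  set X : ℝ := stackNorm Xv with hX
  set N : ℝ := stackNorm V with hN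
  have hA0 := stackNorm_nonneg e
  have hB0 := stackNorm_nonneg e'
  have hD0 := stackNorm_nonneg Δx
  have hX0 := stackNorm_nonneg Xv
  have hN0 := stackNorm_nonneg V
  -- Step 0: replace lamn, lhn by |lamn|, |lhn|
  set lamn' : ℝ := |lamn| with hlamn'
  set lhn' : ℝ := |lhn| with hlhn'
  have hlamn2 : stackNorm (blockMul L ed) ≤ lamn' * stackNorm ed :=
    le_trans (hlamn ed) (mul_le_mul_of_nonneg_right (le_abs_self _) (stackNorm_nonneg _))
  have hlhn2 : stackNorm (blockMul Ls Δx) ≤ lhn' * stackNorm Δx :=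
    le_trans (hlhn Δx) (mul_le_mul_of_nonneg_right (le_abs_self _) (stackNorm_nonneg _))
  have hlamn'0 : 0 ≤ lamn' := abs_nonneg _
  have hlhn'0 : 0 ≤ lhn' := abs_nonneg _
  -- stackNorm ed ≤ A + B
  have hedAB : stackNorm ed ≤ B + A := stackNorm_sub_le e' e
  -- Step 1: 2cN ≤ c lamn' (B+A) + ℓ X + c lhn' D + γ D
  have hVid : (fun i => (2 * c) • V i)
      = fun i => (((c • blockMul L ed i - g i) - c • blockMul Ls Δx i) - Δ i) := by
    funext i
    have := hid i
    have h' : (2 * c) • blockMul Mᵀ w i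
        = c • blockMul L ed i - (g i + c • blockMul Ls Δx i + Δ i) := by
      rw [this]; abel
    rw [hV, h']; abel
  have hstep1 : 2 * c * N ≤ c * (lamn' * (B + A)) + ℓ * X + c * (lhn' * D) + γ * D := by
    have e1 : stackNorm (fun i => (2 * c) • V i) = (2 * c) * N := by
      rw [stackNorm_smul, abs_of_pos (by linarith : (0:ℝ) < 2 * c)]
    have e2 : stackNorm (fun i => (((c • blockMul L ed i - g i) - c • blockMul Ls Δx i) - Δ i))
        ≤ stackNorm (fun i => c • blockMul L ed i) + stackNorm g
          + stackNorm (fun i => c • blockMul Ls Δx i) + stackNorm Δ := by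
      calc stackNorm (fun i => (((c • blockMul L ed i - g i) - c • blockMul Ls Δx i) - Δ i))
          ≤ stackNorm (fun i => ((c • blockMul L ed i - g i) - c • blockMul Ls Δx i))
            + stackNorm Δ := stackNorm_sub_le _ _
        _ ≤ (stackNorm (fun i => (c • blockMul L ed i - g i))
            + stackNorm (fun i => c • blockMul Ls Δx i)) + stackNorm Δ := by
            have := stackNorm_sub_le (fun i => (c • blockMul L ed i - g i))
              (fun i => c • blockMul Ls Δx i)
            linarith
        _ ≤ ((stackNorm (fun i => c • blockMul L ed i) + stackNorm g)
            + stackNorm (fun i => c • blockMul Ls Δx i)) + stackNorm Δ := by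
            have := stackNorm_sub_le (fun i => c • blockMul L ed i) g
            linarith
    have e3 : stackNorm (fun i => c • blockMul L ed i) ≤ c * (lamn' * (B + A)) := by
      rw [show (fun i => c • blockMul L ed i) = fun i => c • (blockMul L ed) i from rfl,
        stackNorm_smul, abs_of_pos hc]
      refine mul_le_mul_of_nonneg_left ?_ (le_of_lt hc)
      exact le_trans hlamn2 (mul_le_mul_of_nonneg_left hedAB hlamn'0)
    have e4 : stackNorm (fun i => c • blockMul Ls Δx i) ≤ c * (lhn' * D) := by
      rw [show (fun i => c • blockMul Ls Δx i) = fun i => c • (blockMul Ls Δx) i from rfl,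
        stackNorm_smul, abs_of_pos hc]
      exact mul_le_mul_of_nonneg_left hlhn2 (le_of_lt hc)
    have := congrArg stackNorm hVid
    rw [e1] at this
    calc 2 * c * N = stackNorm (fun i => (((c • blockMul L ed i - g i)
          - c • blockMul Ls Δx i) - Δ i)) := this
      _ ≤ stackNorm (fun i => c • blockMul L ed i) + stackNorm g
          + stackNorm (fun i => c • blockMul Ls Δx i) + stackNorm Δ := e2
      _ ≤ c * (lamn' * (B + A)) + ℓ * X + c * (lhn' * D) + γ * D := by
          have h4 := hΔ; have h5 := hg
          linarith
  -- Step 2: 2 lam2 * ∑ ‖w‖² ≤ N²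
  have hstep2 : 2 * lam2 * ∑ j, ‖w j‖ ^ 2 ≤ N ^ 2 := by
    rw [hN, stackNorm_sq, hV, hz]
    exact specB L M hL hM lam2 hl2min z
  -- conclude via the scalar lemma
  have hA2 : A ^ 2 = ∑ i, ‖e i‖ ^ 2 := stackNorm_sq e
  have hB2 : B ^ 2 = ∑ i, ‖e' i‖ ^ 2 := stackNorm_sq e'
  have hD2 : D ^ 2 = ∑ i, ‖xp i - xm i‖ ^ 2 := stackNorm_sq Δx
  have hX2 : X ^ 2 = ∑ i, ‖xp i - xstar i‖ ^ 2 := stackNorm_sq Xv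
  have hS0 : 0 ≤ ∑ j, ‖w j‖ ^ 2 := Finset.sum_nonneg fun _ _ => sq_nonneg _
  have habs1 : lamn' ^ 2 = lamn ^ 2 := sq_abs lamn
  have habs2 : lhn' ^ 2 = lhn ^ 2 := sq_abs lhn
  have := scalar_step c ℓ γ lam2 lamn' lhn' A B D X N (∑ j, ‖w j‖ ^ 2)
    hc hl2pos hN0 hS0 hstep1 hstep2
  rw [← hA2, ← hB2, ← hD2, ← hX2, ← habs1, ← habs2]
  exact this
end
end

section
/- Maximizer of the limiting condition function. Let λ₂, λₙ, λ̂₁, λ̂ₙ > 0, set u = λ̂ₙ²/(λ₂ λ̂₁), and define for β > 0 the function F∞(β) = (λ̂₁/2 − λ̂ₙ²/(β λ₂)) / (3λₙ + 2βλₙ + λₙ²/(β λ₂)). Then β* = 2u + √(4u² + λₙ/(2λ₂) + 3u) satisfies F∞(β) ≤ F∞(β*) for all β > 0; that is, β* is a global maximizer of F∞ on (0, ∞). -/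
set_option maxHeartbeats 1000000 in
/-- **Maximizer of the limiting condition function.** With `u = λ̂ₙ²/(λ₂ λ̂₁)` and
`β* = 2u + √(4u² + λₙ/(2λ₂) + 3u)`, the function
`F∞(β) = (λ̂₁/2 - λ̂ₙ²/(βλ₂)) / (3λₙ + 2βλₙ + λₙ²/(βλ₂))` satisfies `F∞(β) ≤ F∞(β*)`
for every `β > 0`. -/
theorem limiting_condition_function_maximizer
    (lam2 lamn lh1 lhn : ℝ)
    (hlam2 : 0 < lam2) (hlamn : 0 < lamn) (hlh1 : 0 < lh1) (hlhn : 0 < lhn)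
    (u βstar : ℝ)
    (hu : u = lhn ^ 2 / (lam2 * lh1))
    (hβstar : βstar = 2 * u + Real.sqrt (4 * u ^ 2 + lamn / (2 * lam2) + 3 * u)) :
    ∀ β : ℝ, 0 < β →
      (lh1 / 2 - lhn ^ 2 / (β * lam2)) / (3 * lamn + 2 * β * lamn + lamn ^ 2 / (β * lam2))
        ≤ (lh1 / 2 - lhn ^ 2 / (βstar * lam2)) /
            (3 * lamn + 2 * βstar * lamn + lamn ^ 2 / (βstar * lam2)) := by
  intro β hβ
  have hupos : 0 < u := by
    rw [hu]; positivity
  have hrad : 0 < 4 * u ^ 2 + lamn / (2 * lam2) + 3 * u := by positivity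
  set s := Real.sqrt (4 * u ^ 2 + lamn / (2 * lam2) + 3 * u) with hs
  have hspos : 0 < s := Real.sqrt_pos.mpr hrad
  have hs2 : s ^ 2 = 4 * u ^ 2 + lamn / (2 * lam2) + 3 * u := Real.sq_sqrt hrad.le
  have hbpos : 0 < βstar := by rw [hβstar]; positivity
  -- key quadratic relation
  have hkey : lam2 * βstar ^ 2 = 4 * u * lam2 * βstar + 3 * u * lam2 + lamn / 2 := by
    have : βstar ^ 2 = 4 * u * βstar + 3 * u + lamn / (2 * lam2) := by
      rw [hβstar]; nlinarith [hs2]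
    field_simp at this ⊢
    nlinarith [this]
  have hu' : u * (lam2 * lh1) = lhn ^ 2 := by
    rw [hu]; field_simp
  -- βstar > 2u, numerator at βstar positive
  have hb2u : 2 * u < βstar := by rw [hβstar]; linarith
  have hnum : 0 < lh1 * βstar * lam2 / 2 - lhn ^ 2 := by
    have := hu'
    nlinarith [mul_pos (mul_pos hlh1 hlam2) (sub_pos.mpr hb2u)]
  have hD : 0 < 3 * lamn + 2 * β * lamn + lamn ^ 2 / (β * lam2) := by positivity
  have hD' : 0 < 3 * lamn + 2 * βstar * lamn + lamn ^ 2 / (βstar * lam2) := by positivity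
  rw [div_le_div_iff₀ hD hD']
  have hβ' : β ≠ 0 := ne_of_gt hβ
  have hb' : βstar ≠ 0 := ne_of_gt hbpos
  have hl' : lam2 ≠ 0 := ne_of_gt hlam2
  have hzero : lh1 * lam2 * βstar ^ 2 - (4 * lhn ^ 2 * βstar + 3 * lhn ^ 2 + lh1 * lamn / 2) = 0 := by
    nlinarith [hkey, hu']
  have h3 : 2 * lamn * lam2 * (β - βstar) *
      (lh1 * lam2 * βstar ^ 2 - (4 * lhn ^ 2 * βstar + 3 * lhn ^ 2 + lh1 * lamn / 2)) = 0 := by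
    rw [hzero]; ring
  have hpoly : (lh1 * (β * lam2) - 2 * lhn ^ 2) *
      ((3 * lamn + 2 * βstar * lamn) * (βstar * lam2) + lamn ^ 2)
      ≤ (lh1 * (βstar * lam2) - 2 * lhn ^ 2) *
      ((3 * lamn + 2 * β * lamn) * (β * lam2) + lamn ^ 2) := by
    have hid : (lh1 * (βstar * lam2) - 2 * lhn ^ 2) *
        ((3 * lamn + 2 * β * lamn) * (β * lam2) + lamn ^ 2)
        - (lh1 * (β * lam2) - 2 * lhn ^ 2) *
        ((3 * lamn + 2 * βstar * lamn) * (βstar * lam2) + lamn ^ 2)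
        = 4 * (lamn * lam2 * (β - βstar) ^ 2 * (lh1 * βstar * lam2 / 2 - lhn ^ 2))
          + 2 * lamn * lam2 * (β - βstar) *
            (lh1 * lam2 * βstar ^ 2 - (4 * lhn ^ 2 * βstar + 3 * lhn ^ 2 + lh1 * lamn / 2)) := by
      ring
    linarith [hid, h3,
      mul_nonneg (mul_nonneg (mul_nonneg hlamn.le hlam2.le) (sq_nonneg (β - βstar))) hnum.le]
  have e1 : lh1 / 2 - lhn ^ 2 / (β * lam2)
      = (lh1 * (β * lam2) - 2 * lhn ^ 2) / (2 * (β * lam2)) := by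
    field_simp
  have e2 : lh1 / 2 - lhn ^ 2 / (βstar * lam2)
      = (lh1 * (βstar * lam2) - 2 * lhn ^ 2) / (2 * (βstar * lam2)) := by
    field_simp
  have e3 : 3 * lamn + 2 * βstar * lamn + lamn ^ 2 / (βstar * lam2)
      = ((3 * lamn + 2 * βstar * lamn) * (βstar * lam2) + lamn ^ 2) / (βstar * lam2) := by
    field_simp
  have e4 : 3 * lamn + 2 * β * lamn + lamn ^ 2 / (β * lam2)
      = ((3 * lamn + 2 * β * lamn) * (β * lam2) + lamn ^ 2) / (β * lam2) := by
    field_simp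
  rw [e1, e2, e3, e4, div_mul_div_comm, div_mul_div_comm]
  rw [div_le_div_iff₀ (by positivity) (by positivity)]
  calc (lh1 * (β * lam2) - 2 * lhn ^ 2) *
        ((3 * lamn + 2 * βstar * lamn) * (βstar * lam2) + lamn ^ 2) *
        (2 * (βstar * lam2) * (β * lam2))
      ≤ (lh1 * (βstar * lam2) - 2 * lhn ^ 2) *
        ((3 * lamn + 2 * β * lamn) * (β * lam2) + lamn ^ 2) *
        (2 * (βstar * lam2) * (β * lam2)) := by
        exact mul_le_mul_of_nonneg_right hpoly (by positivity)
    _ = (lh1 * (βstar * lam2) - 2 * lhn ^ 2) *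
        ((3 * lamn + 2 * β * lamn) * (β * lam2) + lamn ^ 2) *
        (2 * (β * lam2) * (βstar * lam2)) := by ring
end

section
/- Optimality conditions (analogue of Lemma 2). Suppose each f_i : ℝ^d → ℝ is differentiable and v_i-strongly convex with v_i > 0, let x̄* be the (unique) global minimizer of Σ_{i=1}^n f_i, let x* ∈ ℝ^{nd} stack n copies of x̄*, and let ∇f(x*) stack the gradients (∇f_1(x̄*),…,∇f_n(x̄*)). Let G be an undirected connected graph on n vertices without self-loops with signed Laplacian L = D − W, and let M be any real matrix with MᵀM = 2L, acting blockwise on ℝ^{nd}. Then: (i) there exists φ* in the range of L⊗I_d with ∇f(x*) + φ* = 0; (ii) M x* = 0 (blockwise); and (iii) there exists a unique μ* in the range of M (blockwise) with φ* = Mᵀ μ*. -/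
open scoped RealInnerProductSpace BigOperators
open Matrix

noncomputable section

lemma signedLap_eq {n : ℕ} (G : SimpleGraph (Fin n)) [DecidableRel G.Adj] :
    signedLap G = G.lapMatrix ℝ := rfl

lemma lap_surjective {n : ℕ} (G : SimpleGraph (Fin n)) [DecidableRel G.Adj]
    (hconn : G.Connected) (w : Fin n → ℝ) (hw : ∑ i, w i = 0) :
    ∃ u, (G.lapMatrix ℝ).mulVec u = w := by
  have hn : 0 < n := by have := hconn.nonempty; exact Fin.pos_iff_nonempty.mpr this
  set i0 : Fin n := ⟨0, hn⟩
  set T := Matrix.toLin' (G.lapMatrix ℝ) with hT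
  set σ : (Fin n → ℝ) →ₗ[ℝ] ℝ := ∑ i, LinearMap.proj i with hσdef
  have hσ : ∀ v : Fin n → ℝ, σ v = ∑ i, v i := fun v => by
    simp [hσdef]
  have hone : (fun _ : Fin n => (1:ℝ)) ≠ 0 := by
    intro h; have := congrFun h i0; simp at this
  have hker : LinearMap.ker T = Submodule.span ℝ {fun _ : Fin n => (1:ℝ)} := by
    ext x
    rw [LinearMap.mem_ker, Submodule.mem_span_singleton]
    constructor
    · intro hx
      have h := (G.lapMatrix_mulVec_eq_zero_iff_forall_reachable (x := x)).mp (by rw [hT, Matrix.toLin'_apply] at hx; exact hx)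
      exact ⟨x i0, by funext i; simp [(h i i0 (hconn.preconnected i i0)).symm]⟩
    · rintro ⟨a, rfl⟩
      rw [_root_.map_smul]
      have : T (fun _ => (1:ℝ)) = 0 := by
        rw [hT, Matrix.toLin'_apply]
        exact G.lapMatrix_mulVec_const_eq_zero
      rw [this, smul_zero]
  have hkerrank : Module.finrank ℝ (LinearMap.ker T) = 1 := by
    rw [hker]; exact finrank_span_singleton hone
  have htot : Module.finrank ℝ (Fin n → ℝ) = n := by
    simp [Module.finrank_fintype_fun_eq_card]
  have hrange : Module.finrank ℝ (LinearMap.range T) + 1 = n := by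
    have h := LinearMap.finrank_range_add_finrank_ker T
    rw [hkerrank, htot] at h; exact h
  have hσsurj : Function.Surjective σ := by
    intro c
    refine ⟨Pi.single i0 c, ?_⟩
    rw [hσ]; simp
  have hσker : Module.finrank ℝ (LinearMap.ker σ) + 1 = n := by
    have := LinearMap.finrank_range_add_finrank_ker σ
    rw [LinearMap.range_eq_top.mpr hσsurj, htot] at this
    simpa [add_comm] using this
  have hle : LinearMap.range T ≤ LinearMap.ker σ := by
    rintro _ ⟨x, rfl⟩
    rw [LinearMap.mem_ker, hσ]
    have hcol : ∀ j, ∑ i, (G.lapMatrix ℝ) i j = 0 := by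
      intro j
      have h0 : ∑ i, (G.lapMatrix ℝ) j i = 0 := by
        have h1 := congrFun (G.lapMatrix_mulVec_const_eq_zero (R := ℝ)) j
        simpa [Matrix.mulVec, dotProduct] using h1
      calc ∑ i, (G.lapMatrix ℝ) i j = ∑ i, (G.lapMatrix ℝ) j i := by
            refine Finset.sum_congr rfl fun i _ => ?_
            exact (Matrix.IsSymm.apply (G.isSymm_lapMatrix (R := ℝ)) j i)
        _ = 0 := h0
    calc ∑ i, T x i = ∑ i, ∑ j, (G.lapMatrix ℝ) i j * x j := by
          refine Finset.sum_congr rfl fun i _ => ?_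
          rw [hT, Matrix.toLin'_apply]; rfl
      _ = ∑ j, (∑ i, (G.lapMatrix ℝ) i j) * x j := by
          rw [Finset.sum_comm]; simp [Finset.sum_mul]
      _ = 0 := by simp [hcol]
  have heq : LinearMap.range T = LinearMap.ker σ :=
    Submodule.eq_of_le_of_finrank_le hle (by omega)
  have hwmem : w ∈ LinearMap.range T := by
    rw [heq, LinearMap.mem_ker, hσ]; exact hw
  obtain ⟨u, hu⟩ := hwmem
  exact ⟨u, by rw [← Matrix.toLin'_apply]; exact hu⟩

lemma blockMul_apply_coord {m n d : ℕ} (A : Matrix (Fin m) (Fin n) ℝ)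
    (z : Fin n → EuclideanSpace ℝ (Fin d)) (i : Fin m) (k : Fin d) :
    blockMul A z i k = ∑ j, A i j * z j k := by
  have h := Finset.sum_apply k Finset.univ (fun j => (A i j • z j : EuclideanSpace ℝ (Fin d)))
  simp only [blockMul]
  rw [WithLp.ofLp_sum, h]
  simp [PiLp.smul_apply, smul_eq_mul]

lemma blockMul_sub {m n d : ℕ} (A : Matrix (Fin m) (Fin n) ℝ)
    (x y : Fin n → EuclideanSpace ℝ (Fin d)) :
    blockMul A (fun j => x j - y j) = fun i => blockMul A x i - blockMul A y i := by
  funext i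
  simp [blockMul, smul_sub, Finset.sum_sub_distrib]

lemma blockMul_mul {m n p d : ℕ} (A : Matrix (Fin m) (Fin n) ℝ)
    (B : Matrix (Fin n) (Fin p) ℝ) (z : Fin p → EuclideanSpace ℝ (Fin d)) :
    blockMul (A * B) z = blockMul A (blockMul B z) := by
  funext i
  simp only [blockMul, Matrix.mul_apply, Finset.smul_sum, smul_smul, Finset.sum_smul]
  rw [Finset.sum_comm]

lemma inner_blockMul {m n d : ℕ} (A : Matrix (Fin m) (Fin n) ℝ)
    (x : Fin n → EuclideanSpace ℝ (Fin d)) (y : Fin m → EuclideanSpace ℝ (Fin d)) :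
    ∑ i, ⟪blockMul A x i, y i⟫ = ∑ j, ⟪x j, blockMul Aᵀ y j⟫ := by
  simp only [blockMul, sum_inner, inner_sum, real_inner_smul_left, real_inner_smul_right,
    Matrix.transpose_apply]
  exact Finset.sum_comm

lemma grad_sum_zero {n d : ℕ} (f : Fin n → EuclideanSpace ℝ (Fin d) → ℝ)
    (hdiff : ∀ i, Differentiable ℝ (f i)) (xbar : EuclideanSpace ℝ (Fin d))
    (hmin : ∀ z, ∑ i, f i xbar ≤ ∑ i, f i z) :
    ∑ i, gradient (f i) xbar = 0 := by
  have hloc : IsLocalMin (fun x => ∑ i, f i x) xbar := Filter.Eventually.of_forall hmin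
  have h0 : fderiv ℝ (fun x => ∑ i, f i x) xbar = 0 := hloc.fderiv_eq_zero
  have hs : fderiv ℝ (fun x => ∑ i, f i x) xbar = ∑ i, fderiv ℝ (f i) xbar :=
    fderiv_fun_sum (fun i _ => (hdiff i).differentiableAt)
  have : ∑ i, gradient (f i) xbar
      = (InnerProductSpace.toDual ℝ _).symm (∑ i, fderiv ℝ (f i) xbar) := by
    rw [map_sum]; rfl
  rw [this, ← hs, h0, map_zero]

/-- **Optimality conditions** (analogue of Lemma 2). For strongly convex `f_i`, a
connected graph with Laplacian `L`, and any `M` with `MᵀM = 2L` (acting blockwise):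
(i) there is `φ*` in the range of `L ⊗ I_d` with `∇f(x*) + φ* = 0`;
(ii) `M x* = 0` for the consensus vector `x*` stacking copies of the minimizer; and
(iii) there is a unique `μ*` in the blockwise range of `M` with `φ* = Mᵀ μ*`. -/
theorem ccdqm_optimality_conditions
    {n m d : ℕ} (G : SimpleGraph (Fin n)) [DecidableRel G.Adj] (hconn : G.Connected)
    (f : Fin n → EuclideanSpace ℝ (Fin d) → ℝ) (vi : Fin n → ℝ)
    (hvi : ∀ i, 0 < vi i)
    (hdiff : ∀ i, Differentiable ℝ (f i))
    (hsc : ∀ i x x', vi i * ‖x' - x‖ ^ 2 ≤ ⟪gradient (f i) x' - gradient (f i) x, x' - x⟫)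
    (xbar : EuclideanSpace ℝ (Fin d))
    (hmin : ∀ z, ∑ i, f i xbar ≤ ∑ i, f i z)
    (M : Matrix (Fin m) (Fin n) ℝ) (hM : Mᵀ * M = (2 : ℝ) • signedLap G) :
    (∃ φstar : Fin n → EuclideanSpace ℝ (Fin d),
      (∃ z, blockMul (signedLap G) z = φstar) ∧
      (∀ i, gradient (f i) xbar + φstar i = 0) ∧
      (∃! μstar : Fin m → EuclideanSpace ℝ (Fin d),
        (∃ z, μstar = blockMul M z) ∧ φstar = blockMul Mᵀ μstar)) ∧
    blockMul M (fun _ => xbar) = 0 := by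
  classical
  set φstar : Fin n → EuclideanSpace ℝ (Fin d) := fun i => -(gradient (f i) xbar) with hφ
  have hgsum : ∑ i, gradient (f i) xbar = 0 := grad_sum_zero f hdiff xbar hmin
  have hφsum : ∑ i, φstar i = 0 := by
    simp only [hφ, Finset.sum_neg_distrib, hgsum, neg_zero]
  -- (i): coordinatewise surjectivity of the Laplacian
  have hcoord : ∀ k : Fin d, ∃ u : Fin n → ℝ,
      (G.lapMatrix ℝ).mulVec u = fun i => φstar i k := by
    intro k
    apply lap_surjective G hconn
    have hsa := Finset.sum_apply k Finset.univ (fun i => (φstar i).ofLp)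
    calc ∑ i, φstar i k = (∑ i, φstar i) k := by rw [WithLp.ofLp_sum]; exact hsa.symm
      _ = 0 := by rw [hφsum]; rfl
  choose u hu using hcoord
  set z : Fin n → EuclideanSpace ℝ (Fin d) := fun j => WithLp.toLp 2 (fun k => u k j) with hzdef
  have hz : blockMul (signedLap G) z = φstar := by
    funext i
    ext k
    rw [blockMul_apply_coord]
    have h := congrFun (hu k) i
    simpa [Matrix.mulVec, dotProduct, hzdef, signedLap_eq] using h
  -- (ii): M applied to the consensus vector is zero
  set q := M.mulVec (fun _ => (1:ℝ)) with hq
  have h1 : Mᵀ.mulVec q = 0 := by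
    rw [hq, Matrix.mulVec_mulVec, hM, Matrix.smul_mulVec, signedLap_eq,
      G.lapMatrix_mulVec_const_eq_zero, smul_zero]
  have h2 : q ⬝ᵥ q = 0 := by
    calc q ⬝ᵥ q = q ⬝ᵥ (M *ᵥ fun _ => 1) := by rw [← hq]
      _ = (q ᵥ* M) ⬝ᵥ (fun _ => 1) := Matrix.dotProduct_mulVec _ _ _
      _ = (Mᵀ *ᵥ q) ⬝ᵥ (fun _ => 1) := by rw [Matrix.mulVec_transpose]
      _ = 0 := by rw [h1]; simp
  have hq0 : ∀ i, q i = 0 := by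
    intro i
    have hsum : ∑ j, q j * q j = 0 := h2
    have h := (Finset.sum_eq_zero_iff_of_nonneg
      (fun j _ => mul_self_nonneg (q j))).mp hsum i (Finset.mem_univ i)
    exact mul_self_eq_zero.mp h
  have part2 : blockMul M (fun _ => xbar) = 0 := by
    funext i
    have e1 : blockMul M (fun _ => xbar) i = (∑ j, M i j) • xbar := by
      simp [blockMul, ← Finset.sum_smul]
    have e2 : ∑ j, M i j = q i := by
      simp [hq, Matrix.mulVec, dotProduct]
    rw [e1, e2, hq0 i, zero_smul]
    rfl
  -- (iii)
  set μstar : Fin m → EuclideanSpace ℝ (Fin d) :=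
    blockMul M (fun j => (2⁻¹:ℝ) • z j) with hμdef
  have h2L : blockMul ((2:ℝ) • signedLap G) (fun j => (2⁻¹:ℝ) • z j)
      = blockMul (signedLap G) z := by
    funext i
    simp only [blockMul, Matrix.smul_apply, smul_eq_mul, smul_smul]
    refine Finset.sum_congr rfl fun j _ => ?_
    congr 1; ring
  have hμeq : blockMul Mᵀ μstar = φstar := by
    rw [hμdef, ← blockMul_mul, hM, h2L, hz]
  refine ⟨⟨φstar, ⟨z, hz⟩, fun i => by simp [hφ], ?_⟩, part2⟩
  refine ⟨μstar, ⟨⟨fun j => (2⁻¹:ℝ) • z j, rfl⟩, hμeq.symm⟩, ?_⟩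
  rintro μ ⟨⟨z₁, rfl⟩, hTμ⟩
  set e : Fin n → EuclideanSpace ℝ (Fin d) := fun j => z₁ j - (2⁻¹:ℝ) • z j with hedef
  have hMe : blockMul M e = fun i => blockMul M z₁ i - μstar i := by
    rw [hedef, hμdef]
    exact blockMul_sub M z₁ (fun j => (2⁻¹:ℝ) • z j)
  have hTMe : blockMul Mᵀ (blockMul M e) = 0 := by
    rw [hMe]
    have := blockMul_sub Mᵀ (blockMul M z₁) μstar
    rw [this, ← hTμ, hμeq]
    funext i; simp
  have hinner : ∑ i, ⟪blockMul M e i, blockMul M e i⟫ = 0 := by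
    rw [inner_blockMul M e (blockMul M e), hTMe]
    simp
  have hMe0 : ∀ i, blockMul M e i = 0 := by
    intro i
    have h := (Finset.sum_eq_zero_iff_of_nonneg
      (fun j _ => real_inner_self_nonneg)).mp hinner i (Finset.mem_univ i)
    exact inner_self_eq_zero.mp h
  funext i
  have h := hMe0 i
  rw [hMe] at h
  have := congrFun hMe i
  exact sub_eq_zero.mp h
end
end
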